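/- For any two density matrices ρ, σ (positive semidefinite complex N×N matrices with trace 1), the superfidelity G(ρ,σ) = tr(ρσ) + √(1 - tr(ρ²))·√(1 - tr(σ²)) satisfies 0 ≤ G(ρ,σ) ≤ 1. -/

import Mathlib

open Matrix ComplexOrder

noncomputable def sG {N : ℕ} (ρ σ : Matrix (Fin N) (Fin N) ℂ) : ℝ :=
  (trace (ρ * σ)).re +
    Real.sqrt (1 - (trace (ρ * ρ)).re) * Real.sqrt (1 - (trace (σ * σ)).re)

lemma trace_eq_sum_eig {N : ℕ} {A : Matrix (Fin N) (Fin N) ℂ} (hA : A.IsHermitian) :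
    trace A = ∑ i, (hA.eigenvalues i : ℂ) := by
  conv_lhs => rw [hA.spectral_theorem, Unitary.conjStarAlgAut_apply]
  rw [trace_mul_cycle, Unitary.coe_star_mul_self, one_mul, trace_diagonal]
  rfl

lemma trace_sq_eq_sum_eig {N : ℕ} {A : Matrix (Fin N) (Fin N) ℂ} (hA : A.IsHermitian) :
    trace (A * A) = ∑ i, (hA.eigenvalues i : ℂ) ^ 2 := by
  set U : Matrix (Fin N) (Fin N) ℂ := (hA.eigenvectorUnitary : Matrix (Fin N) (Fin N) ℂ) with hU
  set D : Matrix (Fin N) (Fin N) ℂ := diagonal (RCLike.ofReal ∘ hA.eigenvalues)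
  have hVU : star U * U = 1 := Unitary.coe_star_mul_self hA.eigenvectorUnitary
  have key : A * A = U * (D * D) * star U := by
    conv_lhs => rw [hA.spectral_theorem, Unitary.conjStarAlgAut_apply]
    rw [show (U * D * star U) * (U * D * star U) = U * D * (star U * U) * (D * star U) from by
      noncomm_ring, hVU, mul_one, ← mul_assoc, mul_assoc U D D]
  rw [key, trace_mul_cycle, ← mul_assoc, hVU, one_mul, diagonal_mul_diagonal, trace_diagonal]
  simp [pow_two]

lemma trace_re_nonneg {N : ℕ} {M : Matrix (Fin N) (Fin N) ℂ} (hM : M.PosSemidef) :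
    0 ≤ (trace M).re := by
  rw [trace_eq_sum_eig hM.1]
  have : (∑ i, (hM.1.eigenvalues i : ℂ)) = ((∑ i, hM.1.eigenvalues i : ℝ) : ℂ) := by push_cast; rfl
  rw [this, Complex.ofReal_re]
  exact Finset.sum_nonneg fun i _ => hM.eigenvalues_nonneg i

lemma trace_sq_re_bounds {N : ℕ} {M : Matrix (Fin N) (Fin N) ℂ} (hM : M.PosSemidef)
    (hM1 : trace M = 1) : 0 ≤ (trace (M * M)).re ∧ (trace (M * M)).re ≤ 1 := by
  have hsum : ∑ i, hM.1.eigenvalues i = 1 := by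
    have h := trace_eq_sum_eig hM.1
    rw [hM1] at h
    exact_mod_cast h.symm
  have hre : (trace (M * M)).re = ∑ i, hM.1.eigenvalues i ^ 2 := by
    rw [trace_sq_eq_sum_eig hM.1]
    have : (∑ i, (hM.1.eigenvalues i : ℂ) ^ 2)
        = ((∑ i, hM.1.eigenvalues i ^ 2 : ℝ) : ℂ) := by push_cast; rfl
    rw [this, Complex.ofReal_re]
  rw [hre]
  constructor
  · exact Finset.sum_nonneg fun i _ => sq_nonneg _
  · calc ∑ i, hM.1.eigenvalues i ^ 2 ≤ ∑ i, hM.1.eigenvalues i := by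
          refine Finset.sum_le_sum fun i _ => ?_
          have h0 := hM.eigenvalues_nonneg i
          have h1 : hM.1.eigenvalues i ≤ 1 := by
            rw [← hsum]
            exact Finset.single_le_sum (fun j _ => hM.eigenvalues_nonneg j) (Finset.mem_univ i)
          nlinarith
        _ = 1 := hsum

theorem superfidelity_bounds {N : ℕ} (ρ σ : Matrix (Fin N) (Fin N) ℂ)
    (hρ : ρ.PosSemidef) (hσ : σ.PosSemidef)
    (hρ1 : trace ρ = 1) (hσ1 : trace σ = 1) :
    0 ≤ sG ρ σ ∧ sG ρ σ ≤ 1 := by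
  obtain ⟨ha0, ha1⟩ := trace_sq_re_bounds hρ hρ1
  obtain ⟨hb0, hb1⟩ := trace_sq_re_bounds hσ hσ1
  -- nonnegativity of trace (ρ σ)
  have ht0 : 0 ≤ (trace (ρ * σ)).re := by
    classical
    open scoped MatrixOrder in
    obtain ⟨X, hX, -, hXX⟩ := CFC.exists_sqrt_of_isSelfAdjoint_of_quasispectrumRestricts
      hρ.isHermitian (QuasispectrumRestricts.nnreal_of_nonneg hρ.nonneg)
    have hps : (X ᴴ * σ * X).PosSemidef := hσ.conjTranspose_mul_mul_same _
    rw [show Xᴴ = X from hX] at hps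
    have heq : trace (X * σ * X) = trace (ρ * σ) := by
      rw [trace_mul_cycle, ← hXX]
    rw [← heq]
    exact trace_re_nonneg hps
  -- Cauchy-Schwarz-like bound via PSD of (ρ-σ)²
  have hcs : 2 * (trace (ρ * σ)).re ≤ (trace (ρ * ρ)).re + (trace (σ * σ)).re := by
    have hH : (ρ - σ).IsHermitian := hρ.1.sub hσ.1
    have hps : ((ρ - σ) * (ρ - σ)).PosSemidef := by
      have := posSemidef_conjTranspose_mul_self (ρ - σ)
      rwa [hH.eq] at this
    have h := trace_re_nonneg hps
    have hexp : trace ((ρ - σ) * (ρ - σ))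
        = trace (ρ * ρ) - trace (ρ * σ) - trace (ρ * σ) + trace (σ * σ) := by
      simp only [sub_mul, mul_sub, trace_sub, trace_mul_comm σ ρ]
      ring
    rw [hexp] at h
    simp only [Complex.add_re, Complex.sub_re] at h
    linarith
  set t := (trace (ρ * σ)).re
  set a := (trace (ρ * ρ)).re
  set b := (trace (σ * σ)).re
  set u := Real.sqrt (1 - a) with hu
  set v := Real.sqrt (1 - b) with hv
  have hu2 : u ^ 2 = 1 - a := Real.sq_sqrt (by linarith)
  have hv2 : v ^ 2 = 1 - b := Real.sq_sqrt (by linarith)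
  have hun : 0 ≤ u := Real.sqrt_nonneg _
  have hvn : 0 ≤ v := Real.sqrt_nonneg _
  constructor
  · have : 0 ≤ u * v := mul_nonneg hun hvn
    simp only [sG]
    linarith
  · simp only [sG]
    nlinarith [sq_nonneg (u - v)]
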